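/- Let β > ln 2. There exists a constant K (depending only on β) such that for every integer M ≥ 2 and every m ∈ {0,…,M−1}, under the product μ of M independent standard Gaussian measures on ℝ^M, μ{z : ∃ i ≠ m with z_i ≥ √(2·β·log₂ M) + z_m} ≤ K·exp(−(log₂ M)·E(β)). That is, M-ary orthogonal signaling with normalized energy per bit β under ML detection achieves error probability decaying exponentially in the number of bits log₂ M with exponent E(β). -/

import Mathlib

open MeasureTheory ProbabilityTheory

/-- The per-bit orthogonal-coding error exponent `E(β)` as a function of the
normalized energy per bit `β = E_b/N₀`:
`E(β) = (β/(2 ln 2) − 1)·ln 2` if `β > 4 ln 2`,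
`E(β) = (√(β/ln 2) − 1)²·ln 2` if `ln 2 < β ≤ 4 ln 2`, and `E(β) = 0`
otherwise. -/
noncomputable def Eperbit (β : ℝ) : ℝ :=
  if 4 * Real.log 2 < β then (β / (2 * Real.log 2) - 1) * Real.log 2
  else if Real.log 2 < β then (Real.sqrt (β / Real.log 2) - 1) ^ 2 * Real.log 2
  else 0

open Real
open scoped ENNReal NNReal

section OrthogonalMLAux

lemma gauss_shift (t : ℝ) : ∫ x : ℝ, Real.exp (-(1/2) * (x - t)^2) = Real.sqrt (2 * π) := by
  rw [integral_sub_right_eq_self (μ := volume) (fun x => Real.exp (-(1/2) * x^2)) t,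
    integral_gaussian]
  rw [show π / (1/2) = 2 * π by ring]

lemma integral_pdf_mul_exp (t : ℝ) :
    ∫ x, gaussianPDFReal 0 1 x * Real.exp (t * x) = Real.exp (t^2/2) := by
  have h1 : ∀ x : ℝ, gaussianPDFReal 0 1 x * Real.exp (t * x)
      = (Real.sqrt (2 * π))⁻¹ * Real.exp (t^2/2) * Real.exp (-(1/2) * (x - t)^2) := by
    intro x
    simp only [gaussianPDFReal, NNReal.coe_one, mul_one, sub_zero]
    rw [mul_assoc, mul_assoc, ← Real.exp_add, ← Real.exp_add]
    ring_nf
  simp_rw [h1]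
  rw [integral_const_mul, gauss_shift, mul_comm, ← mul_assoc,
    mul_inv_cancel₀ (by positivity), one_mul]

lemma integrable_pdf_mul_exp (t : ℝ) :
    Integrable (fun x => gaussianPDFReal 0 1 x * Real.exp (t * x)) := by
  have h1 : ∀ x : ℝ, gaussianPDFReal 0 1 x * Real.exp (t * x)
      = (Real.sqrt (2 * π))⁻¹ * Real.exp (t^2/2) * Real.exp (-(1/2) * (x - t)^2) := by
    intro x
    simp only [gaussianPDFReal, NNReal.coe_one, mul_one, sub_zero]
    rw [mul_assoc, mul_assoc, ← Real.exp_add, ← Real.exp_add]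
    ring_nf
  simp_rw [h1]
  exact ((integrable_exp_neg_mul_sq (by norm_num : (0:ℝ) < 1/2)).comp_sub_right t).const_mul _

lemma lintegral_exp_gaussian (t : ℝ) :
    ∫⁻ x, ENNReal.ofReal (Real.exp (t * x)) ∂(gaussianReal 0 1)
      = ENNReal.ofReal (Real.exp (t^2/2)) := by
  rw [gaussianReal_of_var_ne_zero 0 one_ne_zero,
    lintegral_withDensity_eq_lintegral_mul _ (measurable_gaussianPDF 0 1)
      ((measurable_const_mul t).exp.ennreal_ofReal)]
  have : ∀ x : ℝ, (gaussianPDF 0 1 * fun x => ENNReal.ofReal (Real.exp (t * x))) x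
      = ENNReal.ofReal (gaussianPDFReal 0 1 x * Real.exp (t * x)) := by
    intro x
    simp [gaussianPDF, ENNReal.ofReal_mul (gaussianPDFReal_nonneg 0 1 x)]
  simp_rw [this]
  rw [← ofReal_integral_eq_lintegral_ofReal (integrable_pdf_mul_exp t)
    (Filter.Eventually.of_forall fun x => mul_nonneg (gaussianPDFReal_nonneg 0 1 x) (Real.exp_nonneg _)), integral_pdf_mul_exp]

lemma lintegral_pi_two {M : ℕ} {i m : Fin M} (hne : i ≠ m) (g h : ℝ → ℝ≥0∞)
    (hg : Measurable g) (hh : Measurable h) :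
    ∫⁻ z, g (z i) * h (z m) ∂(Measure.pi fun _ : Fin M => gaussianReal 0 1)
      = (∫⁻ x, g x ∂(gaussianReal 0 1)) * ∫⁻ x, h x ∂(gaussianReal 0 1) := by
  classical
  set ν : Fin M → Measure ℝ := fun _ => gaussianReal 0 1 with hν
  have hf : Measurable fun z : Fin M → ℝ => g (z i) * h (z m) :=
    (hg.comp (measurable_pi_apply i)).mul (hh.comp (measurable_pi_apply m))
  set c : ℝ≥0∞ := (∫⁻ x, g x ∂(gaussianReal 0 1)) * ∫⁻ x, h x ∂(gaussianReal 0 1) with hc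
  have key : (∫⋯∫⁻_{i, m}, (fun z => g (z i) * h (z m)) ∂ν) = fun _ => c := by
    ext x
    rw [show ({i, m} : Finset (Fin M)) = insert i {m} by rfl,
      lmarginal_insert _ hf (by simpa using hne)]
    simp_rw [lmarginal_singleton]
    have : ∀ u v : ℝ,
        g (Function.update (Function.update x i u) m v i) *
          h (Function.update (Function.update x i u) m v m) = g u * h v := by
      intro u v
      rw [Function.update_of_ne hne, Function.update_self, Function.update_self]
    simp_rw [this]
    rw [hc]
    simp_rw [lintegral_const_mul _ hh]
    rw [lintegral_mul_const _ hg]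
  have := lintegral_eq_of_lmarginal_eq (μ := ν) ({i, m} : Finset (Fin M))
    hf measurable_const (by
      rw [key]; ext x
      rw [show ({i, m} : Finset (Fin M)) = insert i {m} by rfl,
        lmarginal_insert _ measurable_const (by simpa using hne)]
      simp_rw [lmarginal_singleton, lintegral_const, measure_univ, mul_one]) (f := fun z => g (z i) * h (z m)) (g := fun _ => c)
  rw [this, lintegral_const, measure_univ, mul_one]

lemma gauss_chernoff {M : ℕ} {i m : Fin M} (hne : i ≠ m) (a b r : ℝ) :
    (Measure.pi fun _ : Fin M => gaussianReal 0 1) {z | r ≤ a * z i + b * z m}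
      ≤ ENNReal.ofReal (Real.exp (a^2/2 + b^2/2 - r)) := by
  set μ := Measure.pi fun _ : Fin M => gaussianReal 0 1 with hμ
  set f : (Fin M → ℝ) → ℝ≥0∞ := fun z =>
    ENNReal.ofReal (Real.exp (a * z i + b * z m)) with hf
  have hfm : Measurable f := by
    apply Measurable.ennreal_ofReal
    fun_prop
  have hsub : {z : Fin M → ℝ | r ≤ a * z i + b * z m} ⊆
      {z | ENNReal.ofReal (Real.exp r) ≤ f z} := fun z hz =>
    ENNReal.ofReal_le_ofReal (Real.exp_le_exp.2 hz)
  have hint : ∫⁻ z, f z ∂μ = ENNReal.ofReal (Real.exp (a^2/2 + b^2/2)) := by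
    have h1 : ∀ z : Fin M → ℝ, f z
        = ENNReal.ofReal (Real.exp (a * z i)) * ENNReal.ofReal (Real.exp (b * z m)) := by
      intro z
      rw [hf, ← ENNReal.ofReal_mul (Real.exp_nonneg _), ← Real.exp_add]
    simp_rw [h1]
    rw [lintegral_pi_two hne _ _ ((measurable_const_mul a).exp.ennreal_ofReal)
      ((measurable_const_mul b).exp.ennreal_ofReal),
      lintegral_exp_gaussian, lintegral_exp_gaussian,
      ← ENNReal.ofReal_mul (Real.exp_nonneg _), ← Real.exp_add]
  calc μ {z | r ≤ a * z i + b * z m} ≤ μ {z | ENNReal.ofReal (Real.exp r) ≤ f z} :=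
        measure_mono hsub
    _ ≤ (∫⁻ z, f z ∂μ) / ENNReal.ofReal (Real.exp r) :=
        meas_ge_le_lintegral_div hfm.aemeasurable
          (by simp [Real.exp_pos]) ENNReal.ofReal_ne_top
    _ = ENNReal.ofReal (Real.exp (a^2/2 + b^2/2 - r)) := by
        rw [hint, ← ENNReal.ofReal_div_of_pos (Real.exp_pos _), ← Real.exp_sub]

lemma cover_bound {M : ℕ} (hM : 2 ≤ M) (m : Fin M) (A c s lam mu : ℝ)
    (hs : 0 ≤ s) (hlam : 0 ≤ lam) (hmu : 0 ≤ mu) :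
    (Measure.pi fun _ : Fin M => gaussianReal 0 1)
        {z | ∃ i, i ≠ m ∧ z i ≥ A + z m}
      ≤ ENNReal.ofReal (Real.exp (s^2/2 + s*c)
          + ((M : ℝ) - 1) * Real.exp (lam^2/2 + (mu - lam)^2/2 - (lam*A + mu*c))) := by
  classical
  obtain ⟨i₀, hi₀⟩ : ∃ i₀ : Fin M, i₀ ≠ m := by
    have : 1 < Fintype.card (Fin M) := by rw [Fintype.card_fin]; omega
    exact Fintype.exists_ne_of_one_lt_card this m
  set ν := Measure.pi fun _ : Fin M => gaussianReal 0 1 with hν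
  set S₀ : Set (Fin M → ℝ) := {z | -s*c ≤ 0 * z i₀ + (-s) * z m} with hS₀
  set Si : Fin M → Set (Fin M → ℝ) :=
    fun i => {z | lam*A + mu*c ≤ lam * z i + (mu - lam) * z m} with hSi
  have hcover : {z : Fin M → ℝ | ∃ i, i ≠ m ∧ z i ≥ A + z m}
      ⊆ S₀ ∪ ⋃ i ∈ Finset.univ.erase m, Si i := by
    intro z hz
    obtain ⟨i, him, hzi⟩ := hz
    by_cases hzm : z m ≤ c
    · left
      simp only [hS₀, Set.mem_setOf_eq, zero_mul, zero_add, neg_mul]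
      nlinarith
    · right
      push_neg at hzm
      refine Set.mem_biUnion (Finset.mem_erase.2 ⟨him, Finset.mem_univ i⟩) ?_
      simp only [hSi, Set.mem_setOf_eq]
      nlinarith [mul_le_mul_of_nonneg_left hzi hlam, mul_le_mul_of_nonneg_left hzm.le hmu]
  calc ν {z | ∃ i, i ≠ m ∧ z i ≥ A + z m}
      ≤ ν (S₀ ∪ ⋃ i ∈ Finset.univ.erase m, Si i) := measure_mono hcover
    _ ≤ ν S₀ + ν (⋃ i ∈ Finset.univ.erase m, Si i) := measure_union_le _ _
    _ ≤ ν S₀ + ∑ i ∈ Finset.univ.erase m, ν (Si i) := by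
        gcongr
        exact measure_biUnion_finset_le _ _
    _ ≤ ENNReal.ofReal (Real.exp (s^2/2 + s*c))
        + ∑ i ∈ Finset.univ.erase m,
            ENNReal.ofReal (Real.exp (lam^2/2 + (mu - lam)^2/2 - (lam*A + mu*c))) := by
        gcongr with i hi
        · refine le_trans (gauss_chernoff hi₀ 0 (-s) (-s*c)) ?_
          rw [show (0:ℝ)^2/2 + (-s)^2/2 - (-s*c) = s^2/2 + s*c by ring]
        · exact gauss_chernoff (Finset.mem_erase.1 hi).1 lam (mu - lam) (lam*A + mu*c)
    _ ≤ ENNReal.ofReal (Real.exp (s^2/2 + s*c)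
          + ((M : ℝ) - 1) * Real.exp (lam^2/2 + (mu - lam)^2/2 - (lam*A + mu*c))) := by
        rw [Finset.sum_const, Finset.card_erase_of_mem (Finset.mem_univ m), Finset.card_univ,
          Fintype.card_fin, nsmul_eq_mul, ENNReal.ofReal_add (Real.exp_nonneg _)
            (mul_nonneg (by
              have : (1:ℝ) ≤ (M:ℝ) := by exact_mod_cast (by omega : 1 ≤ M)
              linarith) (Real.exp_nonneg _))]
        gcongr
        rw [← ENNReal.ofReal_natCast, ← ENNReal.ofReal_mul (by positivity)]
        apply ENNReal.ofReal_le_ofReal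
        gcongr
        rw [Nat.cast_sub (by omega)]
        norm_num


end OrthogonalMLAux

/-- For every normalized energy per bit `β > ln 2`, `M`-ary orthogonal
signaling under ML detection achieves an error probability decaying
exponentially in the number of bits `log₂ M` with exponent `E(β)`:
there is a constant `K` (depending only on `β`) so that for all `M ≥ 2` and
every true message `m`, the probability that some false statistic `Z_i`
(`i ≠ m`) exceeds the true statistic `√(2·β·log₂ M) + Z_m` is at most
`K·exp(−(log₂ M)·E(β))`. -/
theorem orthogonal_ML_error_exponent (β : ℝ) (hβ : Real.log 2 < β) :
    ∃ K : ℝ, 0 < K ∧ ∀ M : ℕ, 2 ≤ M → ∀ m : Fin M,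
      (Measure.pi fun _ : Fin M => gaussianReal 0 1)
          {z | ∃ i, i ≠ m ∧ z i ≥ Real.sqrt (2 * β * Real.logb 2 M) + z m} ≤
        ENNReal.ofReal (K * Real.exp (-(Real.logb 2 M) * Eperbit β)) := by

  refine ⟨2, two_pos, ?_⟩
  intro M hM m
  set L := Real.log 2 with hL
  have hL0 : 0 < L := Real.log_pos one_lt_two
  set b := Real.logb 2 (M : ℝ) with hb
  have hM1 : (1:ℝ) < (M:ℝ) := by exact_mod_cast (by omega : 1 < M)
  have hlogM : L ≤ Real.log M := Real.log_le_log (by norm_num) (by exact_mod_cast hM)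
  have hb0 : 0 < b := div_pos (lt_of_lt_of_le hL0 hlogM) hL0
  have hbL : b * L = Real.log M := by rw [hb, Real.logb]; field_simp; rw [hL]
  have hMexp : (M:ℝ) = Real.exp (b * L) := by rw [hbL, Real.exp_log (by linarith)]
  set q := Real.sqrt L with hqdef
  set p := Real.sqrt β with hpdef
  set u := Real.sqrt (2*b) with hudef
  have hq2 : q^2 = L := Real.sq_sqrt hL0.le
  have hp2 : p^2 = β := Real.sq_sqrt (by linarith : (0:ℝ) ≤ β)
  have hu2 : u^2 = 2*b := Real.sq_sqrt (by linarith)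
  have hq0 : 0 < q := Real.sqrt_pos.2 hL0
  have hp0 : 0 < p := Real.sqrt_pos.2 (by linarith)
  have hqp : q < p := Real.sqrt_lt_sqrt hL0.le hβ
  have hu0 : 0 < u := Real.sqrt_pos.2 (by linarith)
  have hbu : b = u^2/2 := by linarith
  have hA : Real.sqrt (2 * β * b) = u*p := by
    rw [show 2*β*b = (u*p)^2 by rw [mul_pow, hu2, hp2]; ring]
    exact Real.sqrt_sq (by positivity)
  rw [hA]
  have hs : 0 ≤ u*(p-q) := by nlinarith
  by_cases hcase : β ≤ 4*L
  · -- moderate SNR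
    have hp2q : p ≤ 2*q := by nlinarith
    have hmu : 0 ≤ u*(2*q-p) := by nlinarith
    have hE : Eperbit β = (p - q)^2 := by
      rw [Eperbit, if_neg (by linarith), if_pos hβ, ← hL]
      rw [show β / L = (p/q)^2 by rw [div_pow, hp2, hq2]]
      rw [Real.sqrt_sq (by positivity), ← hq2,
        show p/q - 1 = (p-q)/q by field_simp, div_pow,
        div_mul_cancel₀ _ (by positivity : q^2 ≠ 0)]
    refine le_trans (cover_bound hM m (u*p) (u*(q-p)) (u*(p-q)) (u*q) (u*(2*q-p))
      hs (by positivity) hmu) ?_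
    apply ENNReal.ofReal_le_ofReal
    rw [hE]
    have h1 : (u*(p-q))^2/2 + (u*(p-q))*(u*(q-p)) = -b*(p-q)^2 := by
      rw [hbu]; ring
    have h2 : b*L + ((u*q)^2/2 + (u*(2*q-p) - u*q)^2/2 - ((u*q)*(u*p) + (u*(2*q-p))*(u*(q-p))))
        = -b*(p-q)^2 := by
      rw [hbu, ← hq2]; ring
    have hX : Real.exp (b*L) * Real.exp ((u*q)^2/2 + (u*(2*q-p) - u*q)^2/2
        - ((u*q)*(u*p) + (u*(2*q-p))*(u*(q-p)))) = Real.exp (-b*(p-q)^2) := by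
      rw [← Real.exp_add, h2]
    have hMle : (M:ℝ) - 1 ≤ Real.exp (b * L) := by rw [← hMexp]; linarith
    calc Real.exp ((u*(p-q))^2/2 + (u*(p-q))*(u*(q-p)))
          + ((M:ℝ) - 1) * Real.exp ((u*q)^2/2 + (u*(2*q-p) - u*q)^2/2
              - ((u*q)*(u*p) + (u*(2*q-p))*(u*(q-p))))
        ≤ Real.exp (-b*(p-q)^2) + Real.exp (b*L) * Real.exp ((u*q)^2/2
            + (u*(2*q-p) - u*q)^2/2 - ((u*q)*(u*p) + (u*(2*q-p))*(u*(q-p)))) :=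
          add_le_add (le_of_eq (by rw [h1]))
            (mul_le_mul_of_nonneg_right hMle (Real.exp_nonneg _))
      _ = 2 * Real.exp (-b * (p-q)^2) := by rw [hX]; ring
  · -- high SNR
    push_neg at hcase
    have hE : Eperbit β = β/2 - L := by
      rw [Eperbit, if_pos hcase, ← hL]
      field_simp
    refine le_trans (cover_bound hM m (u*p) (u*(q-p)) (u*(p-q)) (u*p/2) 0
      hs (by positivity) le_rfl) ?_
    apply ENNReal.ofReal_le_ofReal
    rw [hE]
    have h1 : (u*(p-q))^2/2 + (u*(p-q))*(u*(q-p)) ≤ -b*(β/2 - L) := by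
      rw [hbu, ← hq2, ← hp2]
      nlinarith [sq_nonneg (u*(p-2*q))]
    have h2 : b*L + ((u*p/2)^2/2 + ((0:ℝ) - u*p/2)^2/2 - ((u*p/2)*(u*p) + 0*(u*(q-p))))
        = -b*(β/2 - L) := by
      rw [hbu, ← hq2, ← hp2]; ring
    have hX : Real.exp (b*L) * Real.exp ((u*p/2)^2/2 + ((0:ℝ) - u*p/2)^2/2
        - ((u*p/2)*(u*p) + 0*(u*(q-p)))) = Real.exp (-b*(β/2 - L)) := by
      rw [← Real.exp_add, h2]
    have hMle : (M:ℝ) - 1 ≤ Real.exp (b * L) := by rw [← hMexp]; linarith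
    calc Real.exp ((u*(p-q))^2/2 + (u*(p-q))*(u*(q-p)))
          + ((M:ℝ) - 1) * Real.exp ((u*p/2)^2/2 + ((0:ℝ) - u*p/2)^2/2
              - ((u*p/2)*(u*p) + 0*(u*(q-p))))
        ≤ Real.exp (-b*(β/2 - L)) + Real.exp (b*L) * Real.exp ((u*p/2)^2/2
            + ((0:ℝ) - u*p/2)^2/2 - ((u*p/2)*(u*p) + 0*(u*(q-p)))) :=
          add_le_add (Real.exp_le_exp.2 h1)
            (mul_le_mul_of_nonneg_right hMle (Real.exp_nonneg _))
      _ = 2 * Real.exp (-b * (β/2 - L)) := by rw [hX]; ring
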